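/- Let X ~ N(Δ, σ₁²) and Y ~ N(Δ, σ₂²) be independent, and let W = (τ₁X + τ₂Y)/(τ₁+τ₂) with τᵢ = 1/σᵢ². Conditional on the event {l < X < u} (for constants l < u with ℙ(l < X < u) > 0), the random variable W has probability density f(w) = (1/σ₁₂)·φ((w−Δ)/σ₁₂)·[Φ((u−w)/((σ₁/σ₂)σ₁₂)) − Φ((l−w)/((σ₁/σ₂)σ₁₂))] / [Φ((u−Δ)/σ₁) − Φ((l−Δ)/σ₁)], where σ₁₂² = σ₁²σ₂²/(σ₁²+σ₂²). -/

import Mathlib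

open MeasureTheory ProbabilityTheory Real
open scoped NNReal ENNReal

noncomputable def phi (t : ℝ) : ℝ := (Real.sqrt (2 * Real.pi))⁻¹ * Real.exp (-(t ^ 2) / 2)

noncomputable def Phi (t : ℝ) : ℝ := ∫ x in Set.Iic t, phi x

lemma phi_eq : gaussianPDFReal 0 1 = phi := by
  funext x
  simp [gaussianPDFReal, phi]

lemma phi_integrable : Integrable phi := by
  rw [← phi_eq]; exact integrable_gaussianPDFReal 0 1

lemma Phi_sub_Phi {a b : ℝ} (hab : a ≤ b) :
    Phi b - Phi a = ∫ x in a..b, phi x := by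
  rw [Phi, Phi,
    intervalIntegral.integral_Iic_sub_Iic phi_integrable.integrableOn phi_integrable.integrableOn]

lemma gaussianPDFReal_eq {s : ℝ} (hs : 0 < s) (m x : ℝ) :
    gaussianPDFReal m (Real.toNNReal (s^2)) x = (1/s) * phi ((x - m)/s) := by
  rw [gaussianPDFReal, phi, Real.coe_toNNReal _ (sq_nonneg s)]
  have h1 : 2 * π * s ^ 2 = (2*π) * s^2 := by ring
  rw [h1, Real.sqrt_mul (by positivity) (s^2), Real.sqrt_sq hs.le]
  have h2 : -(x - m) ^ 2 / (2 * s ^ 2) = -(((x-m)/s) ^ 2) / 2 := by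
    rw [div_pow]; field_simp
  rw [h2, mul_inv]
  ring

lemma trunc_int {s : ℝ} (hs : 0 < s) (w : ℝ) {a b : ℝ} (hab : a ≤ b) :
    ∫ x in Set.Ioo a b, (1/s) * phi ((x - w)/s) = Phi ((b - w)/s) - Phi ((a - w)/s) := by
  have hab' : (a - w)/s ≤ (b - w)/s := by gcongr
  rw [Phi_sub_Phi hab', ← MeasureTheory.integral_Ioc_eq_integral_Ioo,
    ← intervalIntegral.integral_of_le hab]
  rw [intervalIntegral.integral_const_mul]
  have h1 : (∫ x in a..b, phi ((x - w)/s)) = ∫ x in (a-w)..(b-w), phi (x/s) :=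
    intervalIntegral.integral_comp_sub_right (fun x => phi (x/s)) w
  have h2 : (∫ x in (a-w)..(b-w), phi (x/s)) = s • ∫ x in (a-w)/s..(b-w)/s, phi x :=
    intervalIntegral.integral_comp_div (c := s) phi hs.ne'
  rw [h1, h2, smul_eq_mul]
  field_simp

lemma phi_nonneg (t : ℝ) : 0 ≤ phi t := by
  rw [phi]
  positivity

lemma factor {σ1 σ2 : ℝ} (h1 : 0 < σ1) (h2 : 0 < σ2) (Δ x w : ℝ) :
    gaussianPDFReal Δ ((σ1^2).toNNReal) x *
      gaussianPDFReal (σ1^2/(σ1^2+σ2^2)*Δ + σ2^2/(σ1^2+σ2^2)*x)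
        (((σ1^2/(σ1^2+σ2^2) * σ2)^2).toNNReal) w
    = gaussianPDFReal Δ (((σ1*σ2/Real.sqrt (σ1^2+σ2^2))^2).toNNReal) w *
      gaussianPDFReal w ((((σ1/σ2) * (σ1*σ2/Real.sqrt (σ1^2+σ2^2)))^2).toNNReal) x := by
  have hS : (0:ℝ) < σ1^2+σ2^2 := by positivity
  have hsqS : Real.sqrt (σ1^2+σ2^2) ^ 2 = σ1^2+σ2^2 := Real.sq_sqrt hS.le
  have hrpos : (0:ℝ) < Real.sqrt (σ1^2+σ2^2) := Real.sqrt_pos.mpr hS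
  have hσ12 : (0:ℝ) < σ1*σ2/Real.sqrt (σ1^2+σ2^2) := by positivity
  have hs' : (0:ℝ) < (σ1/σ2) * (σ1*σ2/Real.sqrt (σ1^2+σ2^2)) := by positivity
  have hdpos : (0:ℝ) < σ1^2/(σ1^2+σ2^2) * σ2 := by positivity
  rw [gaussianPDFReal_eq h1, gaussianPDFReal_eq hdpos, gaussianPDFReal_eq hσ12,
    gaussianPDFReal_eq hs']
  simp only [phi]
  have hconst : (σ1*σ2/Real.sqrt (σ1^2+σ2^2)) * ((σ1/σ2) * (σ1*σ2/Real.sqrt (σ1^2+σ2^2)))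
      = σ1 * (σ1^2/(σ1^2+σ2^2) * σ2) := by
    have h : (σ1*σ2/Real.sqrt (σ1^2+σ2^2)) * ((σ1/σ2) * (σ1*σ2/Real.sqrt (σ1^2+σ2^2)))
        = σ1/σ2 * ((σ1*σ2)^2/(Real.sqrt (σ1^2+σ2^2))^2) := by ring
    rw [h, hsqS]
    field_simp
  have E3 : ((w - Δ)/(σ1*σ2/Real.sqrt (σ1^2+σ2^2)))^2
      = (w - Δ)^2*(σ1^2+σ2^2)/(σ1^2*σ2^2) := by
    rw [div_pow, div_pow, hsqS, mul_pow, div_div_eq_mul_div]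
  have E4 : ((x - w)/((σ1/σ2) * (σ1*σ2/Real.sqrt (σ1^2+σ2^2))))^2
      = (x - w)^2*(σ1^2+σ2^2)/(σ1^4) := by
    rw [div_pow, mul_pow, div_pow, div_pow, hsqS]
    field_simp
  have hexp : -(((x - Δ)/σ1)^2)/2 + -(((w - (σ1^2/(σ1^2+σ2^2)*Δ + σ2^2/(σ1^2+σ2^2)*x))/(σ1^2/(σ1^2+σ2^2)*σ2))^2)/2
      = -(((w - Δ)/(σ1*σ2/Real.sqrt (σ1^2+σ2^2)))^2)/2
        + -(((x - w)/((σ1/σ2) * (σ1*σ2/Real.sqrt (σ1^2+σ2^2))))^2)/2 := by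
    rw [E3, E4]
    have key : ((x - Δ)/σ1)^2 + ((w - (σ1^2/(σ1^2+σ2^2)*Δ + σ2^2/(σ1^2+σ2^2)*x))/(σ1^2/(σ1^2+σ2^2)*σ2))^2
        = (w - Δ)^2*(σ1^2+σ2^2)/(σ1^2*σ2^2) + (x - w)^2*(σ1^2+σ2^2)/(σ1^4) := by
      rw [div_pow, div_pow, mul_pow, div_pow]
      field_simp
      ring
    linarith [key]
  calc (1/σ1) * ((Real.sqrt (2*Real.pi))⁻¹ * Real.exp (-(((x - Δ)/σ1)^2)/2)) *
        ((1/(σ1^2/(σ1^2+σ2^2)*σ2)) * ((Real.sqrt (2*Real.pi))⁻¹ *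
          Real.exp (-(((w - (σ1^2/(σ1^2+σ2^2)*Δ + σ2^2/(σ1^2+σ2^2)*x))/(σ1^2/(σ1^2+σ2^2)*σ2))^2)/2)))
      = (1/(σ1*(σ1^2/(σ1^2+σ2^2)*σ2))) * ((Real.sqrt (2*Real.pi))⁻¹)^2 *
          Real.exp (-(((x - Δ)/σ1)^2)/2 + -(((w - (σ1^2/(σ1^2+σ2^2)*Δ + σ2^2/(σ1^2+σ2^2)*x))/(σ1^2/(σ1^2+σ2^2)*σ2))^2)/2) := by
        rw [Real.exp_add]; ring
    _ = (1/((σ1*σ2/Real.sqrt (σ1^2+σ2^2)) * ((σ1/σ2) * (σ1*σ2/Real.sqrt (σ1^2+σ2^2)))))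
          * ((Real.sqrt (2*Real.pi))⁻¹)^2 *
          Real.exp (-(((w - Δ)/(σ1*σ2/Real.sqrt (σ1^2+σ2^2)))^2)/2
            + -(((x - w)/((σ1/σ2) * (σ1*σ2/Real.sqrt (σ1^2+σ2^2))))^2)/2) := by
        rw [hexp, hconst]
    _ = (1/(σ1*σ2/Real.sqrt (σ1^2+σ2^2))) * ((Real.sqrt (2*Real.pi))⁻¹ *
          Real.exp (-(((w - Δ)/(σ1*σ2/Real.sqrt (σ1^2+σ2^2)))^2)/2)) *
        ((1/((σ1/σ2) * (σ1*σ2/Real.sqrt (σ1^2+σ2^2)))) * ((Real.sqrt (2*Real.pi))⁻¹ *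
          Real.exp (-(((x - w)/((σ1/σ2) * (σ1*σ2/Real.sqrt (σ1^2+σ2^2))))^2)/2))) := by
        rw [Real.exp_add]; ring

theorem stmt_1 {Ω : Type*} [MeasurableSpace Ω] (μ : Measure Ω) [IsProbabilityMeasure μ]
    (X Y : Ω → ℝ) (hX : Measurable X) (hY : Measurable Y)
    (hindep : IndepFun X Y μ)
    (σ1 σ2 Δ l u τ1 τ2 σ12 : ℝ) (hσ1 : 0 < σ1) (hσ2 : 0 < σ2) (hlu : l < u)
    (hτ1 : τ1 = 1 / σ1 ^ 2) (hτ2 : τ2 = 1 / σ2 ^ 2)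
    (hσ12 : σ12 = σ1 * σ2 / Real.sqrt (σ1 ^ 2 + σ2 ^ 2))
    (hlawX : Measure.map X μ = gaussianReal Δ (Real.toNNReal (σ1 ^ 2)))
    (hlawY : Measure.map Y μ = gaussianReal Δ (Real.toNNReal (σ2 ^ 2)))
    (E : Set Ω) (hE : E = {ω | l < X ω ∧ X ω < u}) (hEpos : 0 < μ E) :
    Measure.map (fun ω => (τ1 * X ω + τ2 * Y ω) / (τ1 + τ2)) (μ[|E]) =
      volume.withDensity (fun w => ENNReal.ofReal
        ((1 / σ12) * phi ((w - Δ) / σ12) *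
          (Phi ((u - w) / ((σ1 / σ2) * σ12)) - Phi ((l - w) / ((σ1 / σ2) * σ12))) /
          (Phi ((u - Δ) / σ1) - Phi ((l - Δ) / σ1)))) := by
  subst hτ1 hτ2 hσ12
  have hS : (0:ℝ) < σ1^2+σ2^2 := by positivity
  have hv1 : ((σ1^2).toNNReal) ≠ 0 := (Real.toNNReal_pos.mpr (by positivity)).ne'
  have hdσ2 : (0:ℝ) < σ1^2/(σ1^2+σ2^2)*σ2 := by positivity
  have hvW : (((σ1^2/(σ1^2+σ2^2)*σ2)^2).toNNReal) ≠ 0 :=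
    (Real.toNNReal_pos.mpr (by positivity)).ne'
  have hσ12pos : (0:ℝ) < σ1*σ2/Real.sqrt (σ1^2+σ2^2) := by positivity
  have hvtot : (((σ1*σ2/Real.sqrt (σ1^2+σ2^2))^2).toNNReal) ≠ 0 :=
    (Real.toNNReal_pos.mpr (by positivity)).ne'
  have hs'pos : (0:ℝ) < (σ1/σ2) * (σ1*σ2/Real.sqrt (σ1^2+σ2^2)) := by positivity
  have hvX : ((((σ1/σ2) * (σ1*σ2/Real.sqrt (σ1^2+σ2^2)))^2).toNNReal) ≠ 0 :=
    (Real.toNNReal_pos.mpr (by positivity)).ne'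
  -- the weight function
  have hWeq : (fun ω => (1/σ1^2 * X ω + 1/σ2^2 * Y ω) / (1/σ1^2 + 1/σ2^2))
      = fun ω => σ2^2/(σ1^2+σ2^2) * X ω + σ1^2/(σ1^2+σ2^2) * Y ω := by
    funext ω
    field_simp
    ring
  have hT : Measurable fun ω => (X ω, Y ω) := hX.prodMk hY
  have hF : Measurable fun p : ℝ × ℝ => σ2^2/(σ1^2+σ2^2) * p.1 + σ1^2/(σ1^2+σ2^2) * p.2 := by
    fun_prop
  -- the value of μ E
  have hEset : E = X ⁻¹' Set.Ioo l u := by rw [hE]; ext ω; simp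
  have hμE : μ E = ENNReal.ofReal (Phi ((u - Δ)/σ1) - Phi ((l - Δ)/σ1)) := by
    rw [hEset, ← Measure.map_apply hX measurableSet_Ioo, hlawX,
      gaussianReal_apply_eq_integral _ hv1]
    congr 1
    rw [← trunc_int hσ1 Δ hlu.le]
    exact setIntegral_congr_fun measurableSet_Ioo fun x _ => gaussianPDFReal_eq hσ1 Δ x
  have hZ : 0 < Phi ((u - Δ)/σ1) - Phi ((l - Δ)/σ1) := by
    rw [hμE] at hEpos
    exact ENNReal.ofReal_pos.mp hEpos
  -- joint law
  have hXY : Measure.map (fun ω => (X ω, Y ω)) μ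
      = (gaussianReal Δ ((σ1^2).toNNReal)).prod (gaussianReal Δ ((σ2^2).toNNReal)) := by
    rw [← hlawX, ← hlawY]
    exact (indepFun_iff_map_prod_eq_prod_map_map hX.aemeasurable hY.aemeasurable).mp hindep
  have hEeq : E = (fun ω => (X ω, Y ω)) ⁻¹' (Set.Ioo l u ×ˢ (Set.univ : Set ℝ)) := by
    rw [hE]; ext ω; simp
  have hmaprestrict : Measure.map (fun ω => (X ω, Y ω)) (μ.restrict E)
      = ((gaussianReal Δ ((σ1^2).toNNReal)).restrict (Set.Ioo l u)).prod
          (gaussianReal Δ ((σ2^2).toNNReal)) := by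
    rw [hEeq, ← Measure.restrict_map hT (measurableSet_Ioo.prod MeasurableSet.univ), hXY,
      ← Measure.prod_restrict, Measure.restrict_univ]
  have hmapW : Measure.map (fun ω => σ2^2/(σ1^2+σ2^2) * X ω + σ1^2/(σ1^2+σ2^2) * Y ω) (μ.restrict E)
      = Measure.map (fun p : ℝ × ℝ => σ2^2/(σ1^2+σ2^2) * p.1 + σ1^2/(σ1^2+σ2^2) * p.2)
          (((gaussianReal Δ ((σ1^2).toNNReal)).restrict (Set.Ioo l u)).prod
            (gaussianReal Δ ((σ2^2).toNNReal))) := by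
    rw [← hmaprestrict, Measure.map_map hF hT]
    rfl
  -- map under the section maps
  have hmapY : ∀ x : ℝ, Measure.map (fun y => σ2^2/(σ1^2+σ2^2) * x + σ1^2/(σ1^2+σ2^2) * y)
      (gaussianReal Δ ((σ2^2).toNNReal))
      = gaussianReal (σ1^2/(σ1^2+σ2^2)*Δ + σ2^2/(σ1^2+σ2^2)*x)
          (((σ1^2/(σ1^2+σ2^2)*σ2)^2).toNNReal) := by
    intro x
    have h1 : (fun y : ℝ => σ2^2/(σ1^2+σ2^2) * x + σ1^2/(σ1^2+σ2^2) * y)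
        = (fun z : ℝ => σ2^2/(σ1^2+σ2^2) * x + z) ∘ (fun y : ℝ => σ1^2/(σ1^2+σ2^2) * y) := rfl
    rw [h1, ← Measure.map_map (by fun_prop) (by fun_prop)]
    rw [show (fun y : ℝ => σ1^2/(σ1^2+σ2^2) * y) = ((σ1^2/(σ1^2+σ2^2)) * ·) from rfl,
      gaussianReal_map_const_mul]
    rw [show (fun z : ℝ => σ2^2/(σ1^2+σ2^2) * x + z) = ((σ2^2/(σ1^2+σ2^2) * x) + ·) from rfl,
      gaussianReal_map_const_add]
    congr 1
    refine NNReal.coe_injective ?_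
    push_cast
    rw [Real.coe_toNNReal _ (sq_nonneg σ2), Real.coe_toNNReal _ (sq_nonneg _)]
    ring
  -- measurability helper
  have hGmeas : Measurable (Function.uncurry fun x w =>
      gaussianPDF (σ1^2/(σ1^2+σ2^2)*Δ + σ2^2/(σ1^2+σ2^2)*x)
        (((σ1^2/(σ1^2+σ2^2)*σ2)^2).toNNReal) w) := by
    simp only [gaussianPDF, gaussianPDFReal, Function.uncurry]
    fun_prop
  have hHmeas : Measurable (Function.uncurry fun x w =>
      gaussianPDF Δ (((σ1*σ2/Real.sqrt (σ1^2+σ2^2))^2).toNNReal) w *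
        gaussianPDF w ((((σ1/σ2) * (σ1*σ2/Real.sqrt (σ1^2+σ2^2)))^2).toNNReal) x) := by
    simp only [gaussianPDF, gaussianPDFReal, Function.uncurry]
    fun_prop
  -- main computation
  rw [hWeq]
  ext s hs
  rw [ProbabilityTheory.cond, Measure.map_smul, Measure.smul_apply, smul_eq_mul, hmapW,
    Measure.map_apply hF hs, Measure.prod_apply (hF hs)]
  have hsec : ∀ x : ℝ, (gaussianReal Δ ((σ2^2).toNNReal))
      (Prod.mk x ⁻¹' ((fun p : ℝ × ℝ => σ2^2/(σ1^2+σ2^2) * p.1 + σ1^2/(σ1^2+σ2^2) * p.2) ⁻¹' s))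
      = ∫⁻ w in s, gaussianPDF (σ1^2/(σ1^2+σ2^2)*Δ + σ2^2/(σ1^2+σ2^2)*x)
          (((σ1^2/(σ1^2+σ2^2)*σ2)^2).toNNReal) w := by
    intro x
    have h1 : Prod.mk x ⁻¹' ((fun p : ℝ × ℝ => σ2^2/(σ1^2+σ2^2) * p.1 + σ1^2/(σ1^2+σ2^2) * p.2) ⁻¹' s)
        = (fun y => σ2^2/(σ1^2+σ2^2) * x + σ1^2/(σ1^2+σ2^2) * y) ⁻¹' s := rfl
    rw [h1, ← Measure.map_apply (by fun_prop) hs, hmapY x, gaussianReal_apply _ hvW s]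
  simp_rw [hsec]
  have hg : Measurable fun x : ℝ => ∫⁻ w in s, gaussianPDF (σ1^2/(σ1^2+σ2^2)*Δ + σ2^2/(σ1^2+σ2^2)*x)
      (((σ1^2/(σ1^2+σ2^2)*σ2)^2).toNNReal) w :=
    Measurable.lintegral_prod_right' (ν := volume.restrict s) hGmeas
  rw [gaussianReal_of_var_ne_zero Δ hv1, restrict_withDensity measurableSet_Ioo,
    lintegral_withDensity_eq_lintegral_mul _ (measurable_gaussianPDF Δ _) hg]
  simp only [Pi.mul_apply]
  have hne : ∀ (m : ℝ) (v : ℝ≥0) (x : ℝ), gaussianPDF m v x ≠ ⊤ := fun m v x => by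
    rw [gaussianPDF]; exact ENNReal.ofReal_ne_top
  have hprod : ∀ a w : ℝ, gaussianPDF Δ ((σ1^2).toNNReal) a *
      gaussianPDF (σ1^2/(σ1^2+σ2^2)*Δ + σ2^2/(σ1^2+σ2^2)*a)
        (((σ1^2/(σ1^2+σ2^2)*σ2)^2).toNNReal) w
      = gaussianPDF Δ (((σ1*σ2/Real.sqrt (σ1^2+σ2^2))^2).toNNReal) w *
        gaussianPDF w ((((σ1/σ2) * (σ1*σ2/Real.sqrt (σ1^2+σ2^2)))^2).toNNReal) a := by
    intro a w
    simp only [gaussianPDF]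
    rw [← ENNReal.ofReal_mul (gaussianPDFReal_nonneg _ _ _),
      ← ENNReal.ofReal_mul (gaussianPDFReal_nonneg _ _ _), factor hσ1 hσ2 Δ a w]
  have hBapply : ∀ w : ℝ,
      gaussianReal w ((((σ1/σ2) * (σ1*σ2/Real.sqrt (σ1^2+σ2^2)))^2).toNNReal) (Set.Ioo l u)
      = ENNReal.ofReal (Phi ((u - w)/((σ1/σ2) * (σ1*σ2/Real.sqrt (σ1^2+σ2^2))))
          - Phi ((l - w)/((σ1/σ2) * (σ1*σ2/Real.sqrt (σ1^2+σ2^2))))) := by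
    intro w
    rw [gaussianReal_apply_eq_integral _ hvX]
    congr 1
    rw [← trunc_int hs'pos w hlu.le]
    exact setIntegral_congr_fun measurableSet_Ioo fun x _ => gaussianPDFReal_eq hs'pos w x
  have hmain : (∫⁻ a in Set.Ioo l u, gaussianPDF Δ ((σ1^2).toNNReal) a *
        ∫⁻ w in s, gaussianPDF (σ1^2/(σ1^2+σ2^2)*Δ + σ2^2/(σ1^2+σ2^2)*a)
          (((σ1^2/(σ1^2+σ2^2)*σ2)^2).toNNReal) w)
      = ∫⁻ w in s, ENNReal.ofReal ((1/(σ1*σ2/Real.sqrt (σ1^2+σ2^2)))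
            * phi ((w - Δ)/(σ1*σ2/Real.sqrt (σ1^2+σ2^2)))) *
          ENNReal.ofReal (Phi ((u - w)/((σ1/σ2) * (σ1*σ2/Real.sqrt (σ1^2+σ2^2))))
            - Phi ((l - w)/((σ1/σ2) * (σ1*σ2/Real.sqrt (σ1^2+σ2^2))))) := by
    calc (∫⁻ a in Set.Ioo l u, gaussianPDF Δ ((σ1^2).toNNReal) a *
        ∫⁻ w in s, gaussianPDF (σ1^2/(σ1^2+σ2^2)*Δ + σ2^2/(σ1^2+σ2^2)*a)
          (((σ1^2/(σ1^2+σ2^2)*σ2)^2).toNNReal) w)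
        = ∫⁻ a in Set.Ioo l u, ∫⁻ w in s,
            gaussianPDF Δ (((σ1*σ2/Real.sqrt (σ1^2+σ2^2))^2).toNNReal) w *
            gaussianPDF w ((((σ1/σ2) * (σ1*σ2/Real.sqrt (σ1^2+σ2^2)))^2).toNNReal) a := by
          refine lintegral_congr fun a => ?_
          rw [← lintegral_const_mul' _ _ (hne _ _ _)]
          exact lintegral_congr fun w => hprod a w
      _ = ∫⁻ w in s, ∫⁻ a in Set.Ioo l u,
            gaussianPDF Δ (((σ1*σ2/Real.sqrt (σ1^2+σ2^2))^2).toNNReal) w *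
            gaussianPDF w ((((σ1/σ2) * (σ1*σ2/Real.sqrt (σ1^2+σ2^2)))^2).toNNReal) a :=
          lintegral_lintegral_swap hHmeas.aemeasurable
      _ = ∫⁻ w in s, gaussianPDF Δ (((σ1*σ2/Real.sqrt (σ1^2+σ2^2))^2).toNNReal) w *
            gaussianReal w ((((σ1/σ2) * (σ1*σ2/Real.sqrt (σ1^2+σ2^2)))^2).toNNReal)
              (Set.Ioo l u) := by
          refine lintegral_congr fun w => ?_
          rw [lintegral_const_mul' _ _ (hne _ _ _), ← gaussianReal_apply _ hvX]
      _ = ∫⁻ w in s, ENNReal.ofReal ((1/(σ1*σ2/Real.sqrt (σ1^2+σ2^2)))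
            * phi ((w - Δ)/(σ1*σ2/Real.sqrt (σ1^2+σ2^2)))) *
          ENNReal.ofReal (Phi ((u - w)/((σ1/σ2) * (σ1*σ2/Real.sqrt (σ1^2+σ2^2))))
            - Phi ((l - w)/((σ1/σ2) * (σ1*σ2/Real.sqrt (σ1^2+σ2^2))))) := by
          refine lintegral_congr fun w => ?_
          rw [hBapply w]
          simp only [gaussianPDF]
          rw [gaussianPDFReal_eq hσ12pos]
  rw [hmain, withDensity_apply _ hs, hμE]
  have hinv : (ENNReal.ofReal (Phi ((u - Δ)/σ1) - Phi ((l - Δ)/σ1)))⁻¹ ≠ ⊤ :=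
    ENNReal.inv_ne_top.mpr (ENNReal.ofReal_pos.mpr hZ).ne'
  rw [← lintegral_const_mul' _ _ hinv]
  refine lintegral_congr fun w => ?_
  have hK : 0 ≤ (1/(σ1*σ2/Real.sqrt (σ1^2+σ2^2)))
      * phi ((w - Δ)/(σ1*σ2/Real.sqrt (σ1^2+σ2^2))) :=
    mul_nonneg (by positivity) (phi_nonneg _)
  rw [ENNReal.ofReal_div_of_pos hZ, ENNReal.ofReal_mul hK, ENNReal.div_eq_inv_mul]
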